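/- (Gyrocircle interior, exterior and membership criterion.) With the setup of the Point to Circumgyrocenter Gyrodistance theorem — A1, A2, A3 ∈ 𝔹 pairwise distinct and not collinear with circumgyrocenter O ∈ 𝔹 and circumgyroradius R; A = (w1·γ_{A1}·A1 + w2·γ_{A2}·A2 + w3·γ_{A3}·A3)/W ∈ 𝔹 with M = w1 + w2 + w3 ≠ 0, W ≠ 0; K = w1w2(γ12 − 1) + w1w3(γ13 − 1) + w2w3(γ23 − 1) — one has: ‖⊖A ⊕ O‖ = R if and only if K = 0; ‖⊖A ⊕ O‖ < R if and only if K > 0; and ‖⊖A ⊕ O‖ > R if and only if K < 0. That is, A lies on, inside, or outside the circumgyrocircle of gyrotriangle A1A2A3 according as K = 0, K > 0, or K < 0. -/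

import Mathlib

open RealInnerProductSpace

/-- Lorentz gamma factor of a vector `v` in the `s`-ball of `ℝⁿ`. -/
noncomputable def egamma {n : ℕ} (s : ℝ) (v : EuclideanSpace ℝ (Fin n)) : ℝ :=
  1 / Real.sqrt (1 - ‖v‖ ^ 2 / s ^ 2)

/-- Einstein addition on the `s`-ball of `ℝⁿ`. -/
noncomputable def eadd {n : ℕ} (s : ℝ) (u v : EuclideanSpace ℝ (Fin n)) :
    EuclideanSpace ℝ (Fin n) :=
  (1 / (1 + ⟪u, v⟫ / s ^ 2)) •
    (u + (1 / egamma s u) • v + (egamma s u / (s ^ 2 * (1 + egamma s u))) • ⟪u, v⟫ • u)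

/-- Gyroangle at vertex `X` between points `Y` and `Z`. -/
noncomputable def gyroangle {n : ℕ} (s : ℝ) (X Y Z : EuclideanSpace ℝ (Fin n)) : ℝ :=
  Real.arccos ⟪‖eadd s (-X) Y‖⁻¹ • eadd s (-X) Y, ‖eadd s (-X) Z‖⁻¹ • eadd s (-X) Z⟫

/-- Gamma factor of a real gyrodistance `d`. -/
noncomputable def gammaR (s d : ℝ) : ℝ := 1 / Real.sqrt (1 - d ^ 2 / s ^ 2)

lemma ball_pos {n : ℕ} {s : ℝ} (hs : 0 < s) {u : EuclideanSpace ℝ (Fin n)}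
    (hu : ‖u‖ < s) : 0 < 1 - ‖u‖ ^ 2 / s ^ 2 := by
  have h : ‖u‖ ^ 2 < s ^ 2 := by nlinarith [norm_nonneg u]
  have : ‖u‖ ^ 2 / s ^ 2 < 1 := (div_lt_one (by positivity)).mpr h
  linarith

lemma egamma_pos {n : ℕ} {s : ℝ} (hs : 0 < s) {u : EuclideanSpace ℝ (Fin n)}
    (hu : ‖u‖ < s) : 0 < egamma s u := by
  have := ball_pos hs hu
  rw [egamma]; positivity

lemma egamma_sq {n : ℕ} {s : ℝ} (hs : 0 < s) {u : EuclideanSpace ℝ (Fin n)}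
    (hu : ‖u‖ < s) : egamma s u ^ 2 * (1 - ‖u‖ ^ 2 / s ^ 2) = 1 := by
  have h := ball_pos hs hu
  rw [egamma, div_pow, one_pow, Real.sq_sqrt h.le, one_div, inv_mul_cancel₀ h.ne']

lemma inner_lt {n : ℕ} {s : ℝ} (hs : 0 < s) {u v : EuclideanSpace ℝ (Fin n)}
    (hu : ‖u‖ < s) (hv : ‖v‖ < s) : 0 < 1 - ⟪u, v⟫ / s ^ 2 := by
  have h := abs_real_inner_le_norm u v
  have h2 : ‖u‖ * ‖v‖ < s ^ 2 := by nlinarith [norm_nonneg u, norm_nonneg v]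
  have h3 : ⟪u, v⟫ < s ^ 2 := lt_of_le_of_lt (le_trans (le_abs_self _) h) h2
  have : ⟪u, v⟫ / s ^ 2 < 1 := (div_lt_one (by positivity)).mpr h3
  linarith

lemma norm_comb {n : ℕ} (a b : ℝ) (u v : EuclideanSpace ℝ (Fin n)) :
    ‖a • u + b • v‖ ^ 2 = a ^ 2 * ‖u‖ ^ 2 + 2 * (a * b) * ⟪u, v⟫ + b ^ 2 * ‖v‖ ^ 2 := by
  rw [norm_add_sq_real, norm_smul, norm_smul, real_inner_smul_left, real_inner_smul_right]
  simp only [mul_pow, norm_norm, Real.norm_eq_abs, sq_abs]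
  ring


lemma scalar_key (s p t b : ℝ) (hs : s ≠ 0) (hpne : p ≠ 0) (h1p : 1 + p ≠ 0)
    (hst : s ^ 2 - t ≠ 0) :
    1 - ((1 / (1 - t / s ^ 2) * (-1 + t / (s ^ 2 * (1 + p)))) ^ 2 * (s ^ 2 - s ^ 2 * p ^ 2)
        + 2 * ((1 / (1 - t / s ^ 2) * (-1 + t / (s ^ 2 * (1 + p)))) * (1 / (1 - t / s ^ 2) * p)) * t
        + (1 / (1 - t / s ^ 2) * p) ^ 2 * b) / s ^ 2
      = (1 - (s ^ 2 - s ^ 2 * p ^ 2) / s ^ 2) * (1 - b / s ^ 2) / (1 - t / s ^ 2) ^ 2 := by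
  have htne : 1 - t / s ^ 2 ≠ 0 := by
    have : 1 - t / s ^ 2 = (s ^ 2 - t) / s ^ 2 := by field_simp
    rw [this]
    exact div_ne_zero hst (pow_ne_zero 2 hs)
  field_simp
  ring

lemma g_eadd_neg {n : ℕ} {s : ℝ} (hs : 0 < s) {u v : EuclideanSpace ℝ (Fin n)}
    (hu : ‖u‖ < s) (hv : ‖v‖ < s) :
    1 - ‖eadd s (-u) v‖ ^ 2 / s ^ 2 =
      (1 - ‖u‖ ^ 2 / s ^ 2) * (1 - ‖v‖ ^ 2 / s ^ 2) / (1 - ⟪u, v⟫ / s ^ 2) ^ 2 := by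
  have hgu := ball_pos hs hu
  have ht := inner_lt hs hu hv
  set p := Real.sqrt (1 - ‖u‖ ^ 2 / s ^ 2) with hpdef
  have hp : 0 < p := Real.sqrt_pos.mpr hgu
  have hpp : p ^ 2 = 1 - ‖u‖ ^ 2 / s ^ 2 := Real.sq_sqrt hgu.le
  have hsne : s ≠ 0 := hs.ne'
  have hpne : p ≠ 0 := hp.ne'
  have h1p : (1 : ℝ) + p ≠ 0 := by positivity
  have htne : 1 - ⟪u, v⟫ / s ^ 2 ≠ 0 := ht.ne'
  have hγ : egamma s (-u) = 1 / p := by rw [egamma, norm_neg]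
  have hiu : ⟪-u, v⟫ = -⟪u, v⟫ := by rw [inner_neg_left]
  have hu2 : ‖u‖ ^ 2 = s ^ 2 - s ^ 2 * p ^ 2 := by
    rw [hpp]; field_simp; ring
  have key : eadd s (-u) v =
      (1 / (1 - ⟪u, v⟫ / s ^ 2) * (-1 + ⟪u, v⟫ / (s ^ 2 * (1 + p)))) • u
        + (1 / (1 - ⟪u, v⟫ / s ^ 2) * p) • v := by
    rw [eadd, hγ, hiu]
    match_scalars
    · field_simp
      ring
    · field_simp
      ring
  have hst : s ^ 2 - ⟪u, v⟫ ≠ 0 := by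
    have h4 : ⟪u, v⟫ / s ^ 2 < 1 := by linarith
    have h5 : ⟪u, v⟫ < s ^ 2 := (div_lt_one (by positivity)).mp h4
    exact sub_ne_zero.mpr (ne_of_gt h5)
  rw [key, norm_comb, hu2]
  exact scalar_key s p ⟪u, v⟫ (‖v‖ ^ 2) hsne hpne h1p hst

lemma egamma_eadd_neg {n : ℕ} {s : ℝ} (hs : 0 < s) {u v : EuclideanSpace ℝ (Fin n)}
    (hu : ‖u‖ < s) (hv : ‖v‖ < s) :
    egamma s (eadd s (-u) v) = egamma s u * egamma s v * (1 - ⟪u, v⟫ / s ^ 2) := by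
  have hgu := ball_pos hs hu
  have hgv := ball_pos hs hv
  have ht := inner_lt hs hu hv
  rw [egamma, g_eadd_neg hs hu hv, egamma, egamma]
  rw [show (1 - ‖u‖ ^ 2 / s ^ 2) * (1 - ‖v‖ ^ 2 / s ^ 2) / (1 - ⟪u, v⟫ / s ^ 2) ^ 2
      = (Real.sqrt (1 - ‖u‖ ^ 2 / s ^ 2) * Real.sqrt (1 - ‖v‖ ^ 2 / s ^ 2)
          / (1 - ⟪u, v⟫ / s ^ 2)) ^ 2 by
    rw [div_pow, mul_pow, Real.sq_sqrt hgu.le, Real.sq_sqrt hgv.le]]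
  rw [Real.sqrt_sq (by positivity)]
  have h1 : Real.sqrt (1 - ‖u‖ ^ 2 / s ^ 2) ≠ 0 := by positivity
  have h2 : Real.sqrt (1 - ‖v‖ ^ 2 / s ^ 2) ≠ 0 := by positivity
  field_simp

lemma sq_from_g {s d X : ℝ} (hs : 0 < s)
    (h : 1 - d ^ 2 / s ^ 2 = X) : d ^ 2 = (1 - X) * s ^ 2 := by
  have h2 : d ^ 2 / s ^ 2 = 1 - X := by linarith
  exact (div_eq_iff (by positivity)).mp h2


set_option maxHeartbeats 2000000 in
/-- **Gyrocircle interior, exterior and membership criterion.** -/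
theorem gyrocircle_interior_exterior {n : ℕ} (hn : 2 ≤ n) (s : ℝ) (hs : 0 < s)
    (A1 A2 A3 O A : EuclideanSpace ℝ (Fin n))
    (hA1 : ‖A1‖ < s) (hA2 : ‖A2‖ < s) (hA3 : ‖A3‖ < s)
    (h12 : A1 ≠ A2) (h13 : A1 ≠ A3) (h23 : A2 ≠ A3)
    (hncol : ¬ Collinear ℝ ({A1, A2, A3} : Set (EuclideanSpace ℝ (Fin n))))
    (γ12 γ13 γ23 m1 m2 m3 D R : ℝ)
    (hγ12 : γ12 = egamma s (eadd s (-A1) A2))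
    (hγ13 : γ13 = egamma s (eadd s (-A1) A3))
    (hγ23 : γ23 = egamma s (eadd s (-A2) A3))
    (hm1 : m1 = (γ12 + γ13 - γ23 - 1) * (γ23 - 1))
    (hm2 : m2 = (γ12 - γ13 + γ23 - 1) * (γ13 - 1))
    (hm3 : m3 = (-γ12 + γ13 + γ23 - 1) * (γ12 - 1))
    (hD : D = m1 * egamma s A1 + m2 * egamma s A2 + m3 * egamma s A3)
    (hDne : D ≠ 0)
    (hO : O = D⁻¹ • ((m1 * egamma s A1) • A1 + (m2 * egamma s A2) • A2 +
      (m3 * egamma s A3) • A3))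
    (hOball : ‖O‖ < s)
    (hR : R = ‖eadd s (-A1) O‖)
    (w1 w2 w3 M W K : ℝ)
    (hM : M = w1 + w2 + w3) (hMne : M ≠ 0)
    (hW : W = w1 * egamma s A1 + w2 * egamma s A2 + w3 * egamma s A3)
    (hWne : W ≠ 0)
    (hA : A = W⁻¹ • ((w1 * egamma s A1) • A1 + (w2 * egamma s A2) • A2 +
      (w3 * egamma s A3) • A3))
    (hAball : ‖A‖ < s)
    (hK : K = w1 * w2 * (γ12 - 1) + w1 * w3 * (γ13 - 1) + w2 * w3 * (γ23 - 1)) :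
    (‖eadd s (-A) O‖ = R ↔ K = 0) ∧
    (‖eadd s (-A) O‖ < R ↔ K > 0) ∧
    (‖eadd s (-A) O‖ > R ↔ K < 0) := by
  obtain ⟨γ1, hγ1d⟩ : ∃ x, x = egamma s A1 := ⟨_, rfl⟩
  obtain ⟨γ2, hγ2d⟩ : ∃ x, x = egamma s A2 := ⟨_, rfl⟩
  obtain ⟨γ3, hγ3d⟩ : ∃ x, x = egamma s A3 := ⟨_, rfl⟩
  rw [← hγ1d, ← hγ2d, ← hγ3d] at hD hO hW hA
  have hγ1pos : 0 < γ1 := hγ1d ▸ egamma_pos hs hA1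
  have hγ2pos : 0 < γ2 := hγ2d ▸ egamma_pos hs hA2
  have hγ3pos : 0 < γ3 := hγ3d ▸ egamma_pos hs hA3
  have sq1 : γ1 ^ 2 * (1 - ‖A1‖ ^ 2 / s ^ 2) = 1 := hγ1d ▸ egamma_sq hs hA1
  have sq2 : γ2 ^ 2 * (1 - ‖A2‖ ^ 2 / s ^ 2) = 1 := hγ2d ▸ egamma_sq hs hA2
  have sq3 : γ3 ^ 2 * (1 - ‖A3‖ ^ 2 / s ^ 2) = 1 := hγ3d ▸ egamma_sq hs hA3
  have hΓ12 : γ12 = γ1 * γ2 * (1 - ⟪A1, A2⟫ / s ^ 2) := by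
    rw [hγ12, egamma_eadd_neg hs hA1 hA2, ← hγ1d, ← hγ2d]
  have hΓ13 : γ13 = γ1 * γ3 * (1 - ⟪A1, A3⟫ / s ^ 2) := by
    rw [hγ13, egamma_eadd_neg hs hA1 hA3, ← hγ1d, ← hγ3d]
  have hΓ23 : γ23 = γ2 * γ3 * (1 - ⟪A2, A3⟫ / s ^ 2) := by
    rw [hγ23, egamma_eadd_neg hs hA2 hA3, ← hγ2d, ← hγ3d]
  -- O expansions
  have hO' : D • O = (m1 * γ1) • A1 + (m2 * γ2) • A2 + (m3 * γ3) • A3 := by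
    rw [hO, smul_smul, mul_inv_cancel₀ hDne, one_smul]
  have hO1 : D * ⟪A1, O⟫ = m1 * γ1 * ‖A1‖ ^ 2 + m2 * γ2 * ⟪A1, A2⟫ + m3 * γ3 * ⟪A1, A3⟫ := by
    have h : ⟪A1, D • O⟫ = ⟪A1, (m1 * γ1) • A1 + (m2 * γ2) • A2 + (m3 * γ3) • A3⟫ := by
      rw [hO']
    simp only [real_inner_smul_right, inner_add_right, real_inner_self_eq_norm_sq] at h
    linear_combination h
  have hO2 : D * ⟪A2, O⟫ = m1 * γ1 * ⟪A1, A2⟫ + m2 * γ2 * ‖A2‖ ^ 2 + m3 * γ3 * ⟪A2, A3⟫ := by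
    have h : ⟪A2, D • O⟫ = ⟪A2, (m1 * γ1) • A1 + (m2 * γ2) • A2 + (m3 * γ3) • A3⟫ := by
      rw [hO']
    simp only [real_inner_smul_right, inner_add_right, real_inner_self_eq_norm_sq] at h
    rw [real_inner_comm A1 A2] at h
    linear_combination h
  have hO3 : D * ⟪A3, O⟫ = m1 * γ1 * ⟪A1, A3⟫ + m2 * γ2 * ⟪A2, A3⟫ + m3 * γ3 * ‖A3‖ ^ 2 := by
    have h : ⟪A3, D • O⟫ = ⟪A3, (m1 * γ1) • A1 + (m2 * γ2) • A2 + (m3 * γ3) • A3⟫ := by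
      rw [hO']
    simp only [real_inner_smul_right, inner_add_right, real_inner_self_eq_norm_sq] at h
    rw [real_inner_comm A1 A3, real_inner_comm A2 A3] at h
    linear_combination h
  -- A expansions
  have hA' : W • A = (w1 * γ1) • A1 + (w2 * γ2) • A2 + (w3 * γ3) • A3 := by
    rw [hA, smul_smul, mul_inv_cancel₀ hWne, one_smul]
  have hAO : W * ⟪A, O⟫ = w1 * γ1 * ⟪A1, O⟫ + w2 * γ2 * ⟪A2, O⟫ + w3 * γ3 * ⟪A3, O⟫ := by
    have h : ⟪W • A, O⟫ = ⟪(w1 * γ1) • A1 + (w2 * γ2) • A2 + (w3 * γ3) • A3, O⟫ := by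
      rw [hA']
    simp only [real_inner_smul_left, inner_add_left] at h
    linear_combination h
  have hAA : W ^ 2 * ‖A‖ ^ 2 =
      (w1 * γ1) ^ 2 * ‖A1‖ ^ 2 + (w2 * γ2) ^ 2 * ‖A2‖ ^ 2 + (w3 * γ3) ^ 2 * ‖A3‖ ^ 2
        + 2 * (w1 * γ1) * (w2 * γ2) * ⟪A1, A2⟫ + 2 * (w1 * γ1) * (w3 * γ3) * ⟪A1, A3⟫
        + 2 * (w2 * γ2) * (w3 * γ3) * ⟪A2, A3⟫ := by
    have h : ⟪W • A, W • A⟫ = ⟪(w1 * γ1) • A1 + (w2 * γ2) • A2 + (w3 * γ3) • A3,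
        (w1 * γ1) • A1 + (w2 * γ2) • A2 + (w3 * γ3) • A3⟫ := by rw [hA']
    simp only [real_inner_smul_left, real_inner_smul_right, inner_add_left, inner_add_right,
      real_inner_self_eq_norm_sq, norm_smul, Real.norm_eq_abs, mul_pow, sq_abs] at h
    rw [real_inner_comm A1 A2, real_inner_comm A1 A3, real_inner_comm A2 A3] at h
    linear_combination h
  -- the equal quantities cᵢ
  obtain ⟨c1, hc1⟩ : ∃ x, x = γ1 * (1 - ⟪A1, O⟫ / s ^ 2) := ⟨_, rfl⟩
  obtain ⟨c2, hc2⟩ : ∃ x, x = γ2 * (1 - ⟪A2, O⟫ / s ^ 2) := ⟨_, rfl⟩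
  obtain ⟨c3, hc3⟩ : ∃ x, x = γ3 * (1 - ⟪A3, O⟫ / s ^ 2) := ⟨_, rfl⟩
  have hDc1 : D * c1 = m1 + m2 * γ12 + m3 * γ13 := by
    rw [hc1]
    linear_combination γ1 * hD - (γ1 / s ^ 2) * hO1 + m1 * sq1 - m2 * hΓ12 - m3 * hΓ13
  have hDc2 : D * c2 = m1 * γ12 + m2 + m3 * γ23 := by
    rw [hc2]
    linear_combination γ2 * hD - (γ2 / s ^ 2) * hO2 + m2 * sq2 - m1 * hΓ12 - m3 * hΓ23
  have hDc3 : D * c3 = m1 * γ13 + m2 * γ23 + m3 := by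
    rw [hc3]
    linear_combination γ3 * hD - (γ3 / s ^ 2) * hO3 + m3 * sq3 - m1 * hΓ13 - m2 * hΓ23
  have hc12 : c1 = c2 := by
    apply mul_left_cancel₀ hDne
    rw [hDc1, hDc2, hm1, hm2, hm3]; ring
  have hc13 : c1 = c3 := by
    apply mul_left_cancel₀ hDne
    rw [hDc1, hDc3, hm1, hm2, hm3]; ring
  have hc1pos : 0 < c1 := by
    rw [hc1]; exact mul_pos hγ1pos (inner_lt hs hA1 hOball)
  -- key scalar identities
  have hWc : W * (1 - ⟪A, O⟫ / s ^ 2) = M * c1 := by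
    linear_combination hW - (1 / s ^ 2) * hAO - w1 * hc1 - w2 * hc2 - w3 * hc3
      - w2 * hc12 - w3 * hc13 - c1 * hM
  have hP : W ^ 2 * (1 - ‖A‖ ^ 2 / s ^ 2) = M ^ 2 + 2 * K := by
    linear_combination (W + w1 * γ1 + w2 * γ2 + w3 * γ3) * hW - (1 / s ^ 2) * hAA
      + w1 ^ 2 * sq1 + w2 ^ 2 * sq2 + w3 ^ 2 * sq3
      - 2 * w1 * w2 * hΓ12 - 2 * w1 * w3 * hΓ13 - 2 * w2 * w3 * hΓ23
      - (M + w1 + w2 + w3) * hM - 2 * hK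
  -- g formulas
  have hgO : 0 < 1 - ‖O‖ ^ 2 / s ^ 2 := ball_pos hs hOball
  have hM2 : 0 < M ^ 2 := lt_of_le_of_ne (sq_nonneg M) (Ne.symm (pow_ne_zero 2 hMne))
  obtain ⟨G0, hG0⟩ : ∃ x, x = 1 - ‖O‖ ^ 2 / s ^ 2 := ⟨_, rfl⟩
  have hG0pos : 0 < G0 := hG0 ▸ hgO
  obtain ⟨E, hE⟩ : ∃ x, x = G0 / (M ^ 2 * c1 ^ 2) := ⟨_, rfl⟩
  have hEpos : 0 < E := by
    rw [hE]; exact div_pos hG0pos (mul_pos hM2 (pow_pos hc1pos 2))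
  have e1 : 1 - ‖A‖ ^ 2 / s ^ 2 = (M ^ 2 + 2 * K) / W ^ 2 := by
    rw [eq_div_iff (pow_ne_zero 2 hWne)]; linear_combination hP
  have e2 : 1 - ⟪A, O⟫ / s ^ 2 = M * c1 / W := by
    rw [eq_div_iff hWne]; linear_combination hWc
  have e3 : 1 - ⟪A1, O⟫ / s ^ 2 = c1 / γ1 := by
    rw [eq_div_iff hγ1pos.ne', hc1]; ring
  have hX : 1 - ‖A1‖ ^ 2 / s ^ 2 = 1 / γ1 ^ 2 := by
    rw [eq_div_iff (pow_ne_zero 2 hγ1pos.ne')]; linear_combination sq1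
  have h1 : 1 - ‖eadd s (-A) O‖ ^ 2 / s ^ 2 = (M ^ 2 + 2 * K) * E := by
    rw [g_eadd_neg hs hAball hOball, e1, e2, ← hG0, hE]
    field_simp
  have h2 : 1 - R ^ 2 / s ^ 2 = M ^ 2 * E := by
    rw [hR, g_eadd_neg hs hA1 hOball, hX, e3, ← hG0, hE]
    field_simp
  have hd2 := sq_from_g hs h1
  have hR2 := sq_from_g hs h2
  have hkey : R ^ 2 - ‖eadd s (-A) O‖ ^ 2 = (2 * K) * (E * s ^ 2) := by
    rw [hd2, hR2]; ring
  have hdnn : (0 : ℝ) ≤ ‖eadd s (-A) O‖ := norm_nonneg _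
  have hRnn : (0 : ℝ) ≤ R := hR ▸ norm_nonneg _
  have hEs : 0 < E * s ^ 2 := mul_pos hEpos (by positivity)
  refine ⟨⟨fun h => ?_, fun h => ?_⟩, ⟨fun h => ?_, fun h => ?_⟩, ⟨fun h => ?_, fun h => ?_⟩⟩
  · have h0 : (2 * K) * (E * s ^ 2) = 0 := by rw [← hkey, h]; ring
    rcases mul_eq_zero.mp h0 with h' | h'
    · linarith
    · exact absurd h' hEs.ne'
  · have h2eq : ‖eadd s (-A) O‖ ^ 2 = R ^ 2 := by
      linear_combination -hkey - 2 * (E * s ^ 2) * h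
    exact (sq_eq_sq₀ hdnn hRnn).mp h2eq
  · have hlt : ‖eadd s (-A) O‖ ^ 2 < R ^ 2 :=
      (pow_lt_pow_iff_left₀ hdnn hRnn two_ne_zero).mpr h
    have h0 : 0 < (2 * K) * (E * s ^ 2) := by linarith
    rcases mul_pos_iff.mp h0 with ⟨h', _⟩ | ⟨_, h'⟩
    · linarith
    · linarith
  · have h0 : 0 < (2 * K) * (E * s ^ 2) := mul_pos (by linarith) hEs
    have hlt : ‖eadd s (-A) O‖ ^ 2 < R ^ 2 := by linarith
    exact (pow_lt_pow_iff_left₀ hdnn hRnn two_ne_zero).mp hlt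
  · have hlt : R ^ 2 < ‖eadd s (-A) O‖ ^ 2 :=
      (pow_lt_pow_iff_left₀ hRnn hdnn two_ne_zero).mpr h
    have h0 : (2 * K) * (E * s ^ 2) < 0 := by linarith
    rcases mul_neg_iff.mp h0 with ⟨h', h''⟩ | ⟨h', h''⟩
    · linarith
    · linarith
  · have h0 : (2 * K) * (E * s ^ 2) < 0 := mul_neg_of_neg_of_pos (by linarith) hEs
    have hlt : R ^ 2 < ‖eadd s (-A) O‖ ^ 2 := by linarith
    exact (pow_lt_pow_iff_left₀ hRnn hdnn two_ne_zero).mp hlt
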